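/- Define g : ℕ → ℕ by g(0) = 1 and, for d ≥ 1, g(d) = mex { XOR_{k=m}^{d-1} g(k) : m = 0, 1, …, d } (the term for m = d being the empty XOR, equal to 0). Then g(d) = 2^(ν₂(d+1)) for all d ∈ ℕ. -/

import Mathlib

lemma ones_xor : ∀ n, ∀ x < 2^n, (2^n - 1) ^^^ x = 2^n - 1 - x := by
  intro n
  induction n with
  | zero => intro x hx; interval_cases x; rfl
  | succ n ih =>
    intro x hx
    have hp : 2^(n+1) = 2 * 2^n := by ring
    have h1 : ((2^(n+1) - 1) ^^^ x) / 2 = (2^n - 1) ^^^ (x / 2) := by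
      rw [Nat.xor_div_two]; congr 1; omega
    have h2 := ih (x/2) (by omega)
    have h3 : ((2^(n+1) - 1) ^^^ x) % 2 = (2^(n+1) - 1 + x) % 2 := Nat.xor_mod_two_eq
    have h4 := Nat.div_add_mod ((2^(n+1)-1) ^^^ x) 2
    have h5 := Nat.div_add_mod x 2
    have hpn : 0 < 2^n := Nat.pow_pos (by norm_num)
    omega

lemma high_xor : ∀ n a, ∀ r < 2^n, ∀ s < 2^n, (a * 2^n + r) ^^^ s = a * 2^n + (r ^^^ s) := by
  intro n
  induction n with
  | zero =>
    intro a r hr s hs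
    interval_cases r; interval_cases s; simp
  | succ n ih =>
    intro a r hr s hs
    have hp : 2^(n+1) = 2 * 2^n := by ring
    have ha : a * 2^(n+1) = 2 * (a * 2^n) := by ring
    have hd : (a * 2^(n+1) + r) / 2 = a * 2^n + r / 2 := by omega
    have h1 : ((a * 2^(n+1) + r) ^^^ s) / 2 = a * 2^n + (r/2 ^^^ s/2) := by
      rw [Nat.xor_div_two, hd, ih a (r/2) (by omega) (s/2) (by omega)]
    have h1' : (r ^^^ s) / 2 = r/2 ^^^ s/2 := Nat.xor_div_two
    have h2 : ((a * 2^(n+1) + r) ^^^ s) % 2 = (a * 2^(n+1) + r + s) % 2 := Nat.xor_mod_two_eq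
    have h2' : (r ^^^ s) % 2 = (r + s) % 2 := Nat.xor_mod_two_eq
    have h3 := Nat.div_add_mod ((a * 2^(n+1) + r) ^^^ s) 2
    have h4 := Nat.div_add_mod (r ^^^ s) 2
    omega

/-- Gray code -/
def gry (n : ℕ) : ℕ := n ^^^ n / 2

lemma gry_xor (m n : ℕ) : gry (m ^^^ n) = gry m ^^^ gry n := by
  unfold gry
  rw [Nat.xor_div_two]
  apply Nat.eq_of_testBit_eq
  intro i
  simp only [Nat.testBit_xor]
  cases m.testBit i <;> cases (m/2).testBit i <;> cases n.testBit i <;>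
    cases (n/2).testBit i <;> rfl

lemma gry_eq_zero {n : ℕ} (h : gry n = 0) : n = 0 := by
  unfold gry at h
  rw [Nat.xor_eq_zero_iff] at h
  omega

lemma gry_injective : Function.Injective gry := by
  intro a b hab
  have : gry (a ^^^ b) = 0 := by rw [gry_xor, hab, Nat.xor_self]
  have := gry_eq_zero this
  rw [Nat.xor_eq_zero_iff] at this
  exact this

lemma gry_lt {n v : ℕ} (h : n < 2^v) : gry n < 2^v :=
  Nat.xor_lt_two_pow h (lt_of_le_of_lt (Nat.div_le_self n 2) h)

lemma gry_surj {v j : ℕ} (hj : j < 2^v) : ∃ x < 2^v, gry x = j := by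
  have himg : (Finset.range (2^v)).image gry = Finset.range (2^v) := by
    apply Finset.eq_of_subset_of_card_le
    · intro y hy
      simp only [Finset.mem_image, Finset.mem_range] at *
      obtain ⟨x, hx, rfl⟩ := hy
      exact gry_lt hx
    · rw [Finset.card_image_of_injective _ gry_injective]
  have : j ∈ (Finset.range (2^v)).image gry := by
    rw [himg]; exact Finset.mem_range.mpr hj
  simp only [Finset.mem_image, Finset.mem_range] at this
  obtain ⟨x, hx, hgx⟩ := this
  exact ⟨x, hx, hgx⟩

lemma gry_ones (v : ℕ) : gry (2^(v+1) - 1) = 2^v := by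
  have hp : 2^(v+1) = 2 * 2^v := by ring
  have hd : (2^(v+1) - 1) / 2 = 2^v - 1 := by omega
  have hpn : 0 < 2^v := Nat.pow_pos (by norm_num)
  unfold gry
  rw [hd, ones_xor (v+1) (2^v - 1) (by omega)]
  omega

lemma mod_ones_xor {d x v : ℕ} (hd : d % 2^v = 2^v - 1) (hx : x < 2^v) :
    d ^^^ x = d - x := by
  have hpn : 0 < 2^v := Nat.pow_pos (by norm_num)
  have hm := Nat.div_add_mod d (2^v)
  have hcomm : (d / 2^v) * 2^v = 2^v * (d / 2^v) := Nat.mul_comm _ _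
  have hdecomp : d = (d / 2^v) * 2^v + (2^v - 1) := by omega
  calc d ^^^ x = ((d / 2^v) * 2^v + (2^v - 1)) ^^^ x := by rw [← hdecomp]
    _ = (d / 2^v) * 2^v + ((2^v - 1) ^^^ x) := high_xor v _ _ (by omega) x hx
    _ = d - x := by rw [ones_xor v x hx]; omega

lemma succ_xor {d v : ℕ} (hd : d % 2^(v+1) = 2^v - 1) : (d + 1) ^^^ d = 2^(v+1) - 1 := by
  have hpn : 0 < 2^v := Nat.pow_pos (by norm_num)
  have hp : 2^(v+1) = 2 * 2^v := by ring
  have hm := Nat.div_add_mod d (2^(v+1))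
  have hcomm : (d / 2^(v+1)) * 2^(v+1) = 2^(v+1) * (d / 2^(v+1)) := Nat.mul_comm _ _
  have hdecomp : d = (d / 2^(v+1)) * 2^(v+1) + (2^v - 1) := by omega
  have key : d ^^^ (2^(v+1) - 1) = d + 1 := by
    calc d ^^^ (2^(v+1) - 1)
        = ((d / 2^(v+1)) * 2^(v+1) + (2^v - 1)) ^^^ (2^(v+1) - 1) := by rw [← hdecomp]
      _ = (d / 2^(v+1)) * 2^(v+1) + ((2^v - 1) ^^^ (2^(v+1) - 1)) :=
          high_xor (v+1) _ _ (by omega) _ (by omega)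
      _ = d + 1 := by
          rw [Nat.xor_comm, ones_xor (v+1) (2^v - 1) (by omega)]; omega
  rw [← key, Nat.xor_comm d, Nat.xor_assoc, Nat.xor_self, Nat.xor_zero]

lemma val_mod {d : ℕ} : d % 2^(padicValNat 2 (d+1) + 1) = 2^(padicValNat 2 (d+1)) - 1 := by
  set v := padicValNat 2 (d+1) with hv
  have h1 : 2^v ∣ d + 1 := pow_padicValNat_dvd
  have h2 : ¬ 2^(v+1) ∣ d + 1 := pow_succ_padicValNat_not_dvd (p := 2) (Nat.succ_ne_zero d)
  have hpn : 0 < 2^v := Nat.pow_pos (by norm_num)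
  obtain ⟨c, hc⟩ := h1
  have hodd : c % 2 = 1 := by
    rcases Nat.even_or_odd c with he | ho
    · exfalso; obtain ⟨e, he⟩ := he
      exact h2 ⟨e, by rw [hc, he, pow_succ]; ring⟩
    · exact Nat.odd_iff.mp ho
  obtain ⟨e, he⟩ : ∃ e, c = 2*e + 1 := ⟨c/2, by omega⟩
  have hd1 : d + 1 = e * 2^(v+1) + 2^v := by rw [hc, he, pow_succ]; ring
  have hd2 : d = e * 2^(v+1) + (2^v - 1) := by omega
  rw [hd2, Nat.add_comm, Nat.add_mul_mod_self_right]
  have hp : 2^(v+1) = 2 * 2^v := by ring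
  exact Nat.mod_eq_of_lt (by omega)

lemma val_mod' {d : ℕ} : d % 2^(padicValNat 2 (d+1)) = 2^(padicValNat 2 (d+1)) - 1 := by
  have h := val_mod (d := d)
  set v := padicValNat 2 (d+1)
  have hpn : 0 < 2^v := Nat.pow_pos (by norm_num)
  have h4 : d % 2^v = (d % 2^(v+1)) % 2^v :=
    (Nat.mod_mod_of_dvd d (pow_dvd_pow 2 (Nat.le_succ v))).symm
  rw [h4, h, Nat.mod_eq_of_lt (by omega)]

lemma gry_succ (k : ℕ) : gry (k+1) = gry k ^^^ 2^(padicValNat 2 (k+1)) := by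
  set v := padicValNat 2 (k+1) with hv
  have h1 : (k+1) ^^^ k = 2^(v+1) - 1 := succ_xor val_mod
  have h2 : gry (k+1) ^^^ gry k = 2^v := by rw [← gry_xor, h1]; exact gry_ones v
  rw [← h2, Nat.xor_comm (gry (k+1)), Nat.xor_xor_cancel_left]

lemma xor_ones_eq_succ {d v : ℕ} (hd : d % 2^(v+1) = 2^v - 1) : d ^^^ (2^(v+1) - 1) = d + 1 := by
  have hpn : 0 < 2^v := Nat.pow_pos (by norm_num)
  have hp : 2^(v+1) = 2 * 2^v := by ring
  have hm := Nat.div_add_mod d (2^(v+1))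
  have hcomm : (d / 2^(v+1)) * 2^(v+1) = 2^(v+1) * (d / 2^(v+1)) := Nat.mul_comm _ _
  have hdecomp : d = (d / 2^(v+1)) * 2^(v+1) + (2^v - 1) := by omega
  calc d ^^^ (2^(v+1) - 1)
      = ((d / 2^(v+1)) * 2^(v+1) + (2^v - 1)) ^^^ (2^(v+1) - 1) := by rw [← hdecomp]
    _ = (d / 2^(v+1)) * 2^(v+1) + ((2^v - 1) ^^^ (2^(v+1) - 1)) :=
        high_xor (v+1) _ _ (by omega) _ (by omega)
    _ = d + 1 := by
        rw [Nat.xor_comm, ones_xor (v+1) (2^v - 1) (by omega)]; omega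

noncomputable def mex (S : Set ℕ) : ℕ := sInf {n | n ∉ S}

def xorIco (f : ℕ → ℕ) (m n : ℕ) : ℕ :=
  ((List.range' m (n - m)).map f).foldr (· ^^^ ·) 0

lemma xorIco_empty (f : ℕ → ℕ) (m : ℕ) : xorIco f m m = 0 := by
  simp [xorIco]

lemma xorIco_cons (f : ℕ → ℕ) {m d : ℕ} (h : m < d) :
    xorIco f m d = f m ^^^ xorIco f (m+1) d := by
  unfold xorIco
  have h1 : d - m = (d - (m+1)) + 1 := by omega
  rw [h1, List.range'_succ]
  simp

theorem stmt2 (g : ℕ → ℕ) (h0 : g 0 = 1)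
    (hrec : ∀ d ≥ 1, g d = mex {v | ∃ m ≤ d, v = xorIco g m d}) :
    ∀ d : ℕ, g d = 2 ^ (padicValNat 2 (d + 1)) := by
  intro d
  induction d using Nat.strong_induction_on with
  | _ d ih =>
  rcases Nat.eq_zero_or_pos d with rfl | hd
  · simpa using h0
  set v := padicValNat 2 (d+1) with hv
  have hpn : 0 < 2^v := Nat.pow_pos (by norm_num)
  -- telescoping
  have hxor : ∀ j m, m + j = d → xorIco g m d = gry m ^^^ gry d := by
    intro j
    induction j with
    | zero => intro m hm; rw [Nat.add_zero] at hm; subst hm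
              rw [xorIco_empty, Nat.xor_self]
    | succ j ihj =>
      intro m hm
      have hmd : m < d := by omega
      rw [xorIco_cons g hmd, ihj (m+1) (by omega), ih m hmd, gry_succ m]
      rw [Nat.xor_comm (gry m), ← Nat.xor_assoc, Nat.xor_xor_cancel_left]
  have hxor' : ∀ m ≤ d, xorIco g m d = gry (m ^^^ d) := by
    intro m hm
    rw [hxor (d - m) m (by omega), gry_xor]
  -- 2^v is not attained
  have hnot : (2:ℕ)^v ∉ {w | ∃ m ≤ d, w = xorIco g m d} := by
    rintro ⟨m, hm, heq⟩
    rw [hxor' m hm] at heq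
    have h2 : gry (2^(v+1) - 1) = 2^v := gry_ones v
    have h3 : m ^^^ d = 2^(v+1) - 1 := gry_injective (heq.symm.trans h2.symm)
    have h4 : m = (2^(v+1) - 1) ^^^ d := by
      rw [← h3, Nat.xor_assoc, Nat.xor_self, Nat.xor_zero]
    have h5 : d ^^^ (2^(v+1) - 1) = d + 1 := xor_ones_eq_succ val_mod
    rw [Nat.xor_comm] at h4
    omega
  -- everything below 2^v is attained
  have hlow : ∀ n < 2^v, n ∈ {w | ∃ m ≤ d, w = xorIco g m d} := by
    intro n hn
    obtain ⟨x, hx, hgx⟩ := gry_surj hn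
    have hdx : d ^^^ x = d - x := mod_ones_xor val_mod' hx
    have hmod : d % 2^v = 2^v - 1 := val_mod'
    refine ⟨d ^^^ x, by omega, ?_⟩
    rw [hxor' (d ^^^ x) (by omega)]
    rw [Nat.xor_comm d x, Nat.xor_assoc, Nat.xor_self, Nat.xor_zero, hgx]
  rw [hrec d hd]
  unfold mex
  apply le_antisymm
  · exact Nat.sInf_le hnot
  · refine le_csInf ⟨_, hnot⟩ fun n hn => ?_
    by_contra h
    push_neg at h
    exact hn (hlow n h)
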